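/- Let F = GF(8) and let β, γ ∈ F with β ≠ γ. Then there exist subsets Π⁰, Π¹ ⊆ F with |Π⁰| = |Π¹| = 4, Π⁰ ∪ Π¹ = F, Π⁰ ∩ Π¹ = ∅, β ∈ Π⁰, γ ∈ Π¹, such that H̄_β ∩ H̄_γ = {∅, F, Π⁰, Π¹}; that is, the intersection consists of the empty set, the all-ones word, and two complementary weight-4 words separating β from γ. -/

import Mathlib

open Finset
open scoped symmDiff

noncomputable instance : DecidableEq (GaloisField 2 3) := Classical.decEq _

noncomputable instance : Fintype (GaloisField 2 3) := Fintype.ofFinite _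

/-- The even-weight code `H̄_β` of length 8: subsets `X` of `GF(8)` with
`|X|` even and `∑_{x ∈ X} (x + β)^3 = 0`. -/
def HbarGF8 (β : GaloisField 2 3) : Set (Finset (GaloisField 2 3)) :=
  {X | Even X.card ∧ ∑ x ∈ X, (x + β) ^ 3 = 0}

namespace HbarAux

local notation "F8" => GaloisField 2 3

lemma two_eq_zero : (2 : F8) = 0 := by
  have := CharP.cast_eq_zero F8 2
  exact_mod_cast this

lemma card_F8 : Fintype.card F8 = 8 := by
  rw [← Nat.card_eq_fintype_card, GaloisField.card 2 3 (by norm_num)]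
  norm_num

lemma cube_inj : Function.Injective (fun x : F8 => x ^ 3) := by
  intro x y h
  simp only at h
  rcases eq_or_ne y 0 with rfl | hy
  · simpa [pow_eq_zero_iff] using h
  · have hx : x ≠ 0 := by
      rintro rfl
      exact hy (by simpa [pow_eq_zero_iff, eq_comm] using h)
    have ht3 : (x / y) ^ 3 = 1 := by
      rw [div_pow, h, div_self (pow_ne_zero _ hy)]
    have ht0 : x / y ≠ 0 := div_ne_zero hx hy
    have ht7 : (x / y) ^ 7 = 1 := by
      have := FiniteField.pow_card_sub_one_eq_one (x / y) ht0
      rwa [card_F8] at this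
    have hxy : x / y = 1 := by
      have h6 : (x / y) ^ 7 = (x / y) ^ 3 * (x / y) ^ 3 * (x / y) := by ring
      rw [ht7, ht3, one_mul, one_mul] at h6
      exact h6.symm
    rwa [div_eq_one_iff_eq hy] at hxy

lemma cube_surj : Function.Surjective (fun x : F8 => x ^ 3) :=
  Finite.injective_iff_surjective.mp cube_inj

lemma exists_ne_zero_ne_one : ∃ m : F8, m ≠ 0 ∧ m ≠ 1 := by
  by_contra hcon
  push_neg at hcon
  have hsub : (univ : Finset F8) ⊆ {0, 1} := by
    intro z _
    rcases eq_or_ne z 0 with rfl | hz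
    · simp
    · simp [hcon z hz]
  have hle := Finset.card_le_card hsub
  rw [Finset.card_univ, card_F8] at hle
  have h2 : ({0, 1} : Finset F8).card ≤ 2 :=
    (Finset.card_insert_le _ _).trans (by simp)
  omega

lemma sum_univ_zero : ∑ x : F8, x = 0 := by
  obtain ⟨m, hm0, hm1⟩ := exists_ne_zero_ne_one
  have h := Equiv.sum_comp (Equiv.mulLeft₀ m hm0) (id : F8 → F8)
  simp only [Equiv.mulLeft₀, Equiv.coe_fn_mk, id] at h
  have h' : m * (∑ x : F8, x) = ∑ x : F8, x := by
    rw [Finset.mul_sum]; exact h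
  have hz : (m - 1) * (∑ x : F8, x) = 0 := by linear_combination h'
  rcases mul_eq_zero.mp hz with h'' | h''
  · exact absurd (by linear_combination h'' : m = 1) hm1
  · exact h''

lemma sum_univ_cube_zero : ∑ x : F8, x ^ 3 = 0 := by
  have h := Equiv.sum_comp (Equiv.ofBijective _
    (Finite.injective_iff_bijective.mp cube_inj)) (id : F8 → F8)
  simp only [Equiv.ofBijective_apply, id] at h
  rw [h]
  exact sum_univ_zero

lemma no_root' (r w : F8) (hw : w ≠ 0) : r ^ 2 + r * w + w ^ 2 ≠ 0 := by
  intro h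
  have hr3 : (fun x : F8 => x ^ 3) r = (fun x : F8 => x ^ 3) w := by
    simp only
    linear_combination (r - w) * h
  have hr : r = w := cube_inj hr3
  rw [hr] at h
  have hw2 : w ^ 2 = 0 := by linear_combination h - w ^ 2 * two_eq_zero
  exact pow_ne_zero 2 hw hw2

lemma sum_cube_shift (X : Finset F8) (hX : Even X.card) (θ : F8) :
    ∑ x ∈ X, (x + θ) ^ 3
      = (∑ x ∈ X, x ^ 3) + θ * (∑ x ∈ X, x) ^ 2 + θ ^ 2 * (∑ x ∈ X, x) := by
  have hc : ((X.card : F8)) = 0 := by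
    rw [CharP.cast_eq_zero_iff F8 2]
    exact hX.two_dvd
  have hsq : ∑ x ∈ X, x ^ 2 = (∑ x ∈ X, x) ^ 2 := (sum_pow_char 2 X _).symm
  calc ∑ x ∈ X, (x + θ) ^ 3
      = ∑ x ∈ X, (x ^ 3 + θ * x ^ 2 + θ ^ 2 * x + θ ^ 3) := by
        refine Finset.sum_congr rfl fun x _ => ?_
        linear_combination (x * θ ^ 2 + x ^ 2 * θ) * two_eq_zero
    _ = (∑ x ∈ X, x ^ 3) + θ * (∑ x ∈ X, x ^ 2) + θ ^ 2 * (∑ x ∈ X, x)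
          + (X.card) • θ ^ 3 := by
        rw [Finset.sum_add_distrib, Finset.sum_add_distrib, Finset.sum_add_distrib,
          ← Finset.mul_sum, ← Finset.mul_sum, Finset.sum_const]
    _ = _ := by rw [hsq, nsmul_eq_mul, hc, zero_mul, add_zero]

lemma card_symmDiff' (X Y : Finset F8) :
    (X ∆ Y).card + (X ∩ Y).card + (X ∩ Y).card = X.card + Y.card := by
  have hu : (X ∆ Y) ∪ (X ∩ Y) = X ∪ Y := symmDiff_sup_inf X Y
  have hd : Disjoint (X ∆ Y) (X ∩ Y) := disjoint_symmDiff_inf X Y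
  have h1 := Finset.card_union_of_disjoint hd
  rw [hu] at h1
  have h3 := Finset.card_union_add_card_inter X Y
  omega

lemma sum_symmDiff' (X Y : Finset F8) (g : F8 → F8) :
    ∑ x ∈ X ∆ Y, g x = (∑ x ∈ X, g x) + ∑ x ∈ Y, g x := by
  have hu : (X ∆ Y) ∪ (X ∩ Y) = X ∪ Y := symmDiff_sup_inf X Y
  have hd : Disjoint (X ∆ Y) (X ∩ Y) := disjoint_symmDiff_inf X Y
  have h1 := Finset.sum_union (f := g) hd
  rw [hu] at h1
  have h3 := Finset.sum_union_inter (s₁ := X) (s₂ := Y) (f := g)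
  have hc := CharTwo.add_self_eq_zero (∑ x ∈ X ∩ Y, g x)
  linear_combination h3 - h1 - hc

lemma no_two (X : Finset F8) (hc : X.card = 2) (h1 : ∑ x ∈ X, x = 0) : False := by
  obtain ⟨a, b, hab, rfl⟩ := Finset.card_eq_two.mp hc
  rw [Finset.sum_pair hab] at h1
  exact hab (by linear_combination h1 - b * two_eq_zero)

lemma no_four (X : Finset F8) (hc : X.card = 4) (h1 : ∑ x ∈ X, x = 0)
    (h3 : ∑ x ∈ X, x ^ 3 = 0) : False := by
  have hpos : 0 < X.card := by omega
  obtain ⟨a, ha⟩ := Finset.card_pos.mp hpos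
  obtain ⟨Y, haY, rfl⟩ : ∃ Y, a ∉ Y ∧ insert a Y = X :=
    ⟨X.erase a, Finset.notMem_erase a X, Finset.insert_erase ha⟩
  rw [Finset.card_insert_of_notMem haY] at hc
  obtain ⟨b, c, d, hbc, hbd, hcd, rfl⟩ := Finset.card_eq_three.mp (by omega : Y.card = 3)
  have hb' : b ∉ ({c, d} : Finset F8) := by simp [hbc, hbd]
  have hc' : c ∉ ({d} : Finset F8) := by simp [hcd]
  rw [Finset.sum_insert haY, Finset.sum_insert hb', Finset.sum_insert hc',
    Finset.sum_singleton] at h1 h3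
  have haval : a = b + c + d := by linear_combination h1 - (b + c + d) * two_eq_zero
  rw [haval] at h3
  have key : (b + c) * (b + d) * (c + d) = 0 := by
    linear_combination h3 - (d^3 + c*d^2 + c^2*d + c^3 + b*d^2 + 2*b*c*d + b*c^2
      + b^2*d + b^2*c + b^3) * two_eq_zero
  rcases mul_eq_zero.mp key with h' | h'
  · rcases mul_eq_zero.mp h' with h'' | h''
    · exact hbc (by linear_combination h'' - c * two_eq_zero)
    · exact hbd (by linear_combination h'' - d * two_eq_zero)
  · exact hcd (by linear_combination h' - d * two_eq_zero)

lemma claimA (X : Finset F8) (he : Even X.card) (h1 : ∑ x ∈ X, x = 0)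
    (h3 : ∑ x ∈ X, x ^ 3 = 0) : X = ∅ ∨ X = univ := by
  have hle : X.card ≤ 8 := by
    have := Finset.card_le_univ X
    rwa [card_F8] at this
  have hmod : X.card % 2 = 0 := Nat.even_iff.mp he
  have hcases : X.card = 0 ∨ X.card = 2 ∨ X.card = 4 ∨ X.card = 6 ∨ X.card = 8 := by omega
  rcases hcases with h | h | h | h | h
  · exact Or.inl (Finset.card_eq_zero.mp h)
  · exact (no_two X h h1).elim
  · exact (no_four X h h1 h3).elim
  · exfalso
    have hcc : Xᶜ.card = 2 := by rw [Finset.card_compl, card_F8, h]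
    have hx1 : ∑ x ∈ Xᶜ, x = 0 := by
      have hh := Finset.sum_add_sum_compl X (fun x => x)
      rw [h1, sum_univ_zero, zero_add] at hh
      exact hh
    exact no_two Xᶜ hcc hx1
  · exact Or.inr ((Finset.card_eq_iff_eq_univ X).mp (by rw [h, card_F8]))

lemma mem_Hbar_iff (θ : F8) (X : Finset F8) (he : Even X.card) :
    X ∈ HbarGF8 θ ↔
      (∑ x ∈ X, x ^ 3) + θ * (∑ x ∈ X, x) ^ 2 + θ ^ 2 * (∑ x ∈ X, x) = 0 := by
  unfold HbarGF8
  rw [Set.mem_setOf_eq, sum_cube_shift X he θ]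
  simp [he]

lemma main_aux (β γ u v : F8) (hβγ : β ≠ γ) (hu0 : u ≠ 0) (hv0 : v ≠ 0) (huv : u ≠ v)
    (hprod : u * v * (u + v) = (β + γ) ^ 3) :
    ∃ P0 P1 : Finset F8,
      P0.card = 4 ∧ P1.card = 4 ∧ P0 ∪ P1 = Finset.univ ∧ P0 ∩ P1 = ∅ ∧
      β ∈ P0 ∧ γ ∈ P1 ∧
      HbarGF8 β ∩ HbarGF8 γ = {(∅ : Finset F8), Finset.univ, P0, P1} := by
  have h2 := two_eq_zero
  have hδ : β + γ ≠ 0 := fun h => hβγ (by linear_combination h - γ * h2)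
  have huv0 : u + v ≠ 0 := fun h => huv (by linear_combination h - v * h2)
  have hne_u : u ≠ β + γ := by
    intro h
    rw [h] at hprod
    have h1 : (β + γ) * (v ^ 2 + v * (β + γ) + (β + γ) ^ 2) = 0 := by
      linear_combination hprod + (β + γ) ^ 3 * h2
    exact no_root' v (β + γ) hδ ((mul_eq_zero.mp h1).resolve_left hδ)
  have hne_v : v ≠ β + γ := by
    intro h
    rw [h] at hprod
    have h1 : (β + γ) * (u ^ 2 + u * (β + γ) + (β + γ) ^ 2) = 0 := by
      linear_combination hprod + (β + γ) ^ 3 * h2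
    exact no_root' u (β + γ) hδ ((mul_eq_zero.mp h1).resolve_left hδ)
  have hne_uv : u + v ≠ β + γ := by
    intro h
    have hv' : v = (β + γ) + u := by linear_combination h - u * h2
    rw [hv'] at hprod
    have h1 : (β + γ) * (u ^ 2 + u * (β + γ) + (β + γ) ^ 2) = 0 := by
      linear_combination hprod + (-(u ^ 2 * (β + γ)) + (β + γ) ^ 3 - u ^ 3) * h2
    exact no_root' u (β + γ) hδ ((mul_eq_zero.mp h1).resolve_left hδ)
  have hβb : β ≠ u + γ := fun h => hne_u (by linear_combination -h - γ * h2)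
  have hβc : β ≠ v + γ := fun h => hne_v (by linear_combination -h - γ * h2)
  have hβd : β ≠ u + v + γ := fun h => hne_uv (by linear_combination -h - γ * h2)
  have hbc : u + γ ≠ v + γ := fun h => huv (by linear_combination h)
  have hbd : u + γ ≠ u + v + γ := fun h => hv0 (by linear_combination -h)
  have hcd : v + γ ≠ u + v + γ := fun h => hu0 (by linear_combination -h)
  have hγb : γ ≠ u + γ := fun h => hu0 (by linear_combination -h)
  have hγc : γ ≠ v + γ := fun h => hv0 (by linear_combination -h)
  have hγd : γ ≠ u + v + γ := fun h => huv0 (by linear_combination -h)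
  set P0 : Finset F8 := {β, u + γ, v + γ, u + v + γ} with hP0
  have hβnotmem : β ∉ ({u + γ, v + γ, u + v + γ} : Finset F8) := by
    simp [hβb, hβc, hβd]
  have hbnotmem : (u + γ) ∉ ({v + γ, u + v + γ} : Finset F8) := by simp [hbc, hbd]
  have hcnotmem : (v + γ) ∉ ({u + v + γ} : Finset F8) := by simp [hcd]
  have hP0card : P0.card = 4 := by
    rw [hP0, Finset.card_insert_of_notMem hβnotmem,
      Finset.card_insert_of_notMem hbnotmem,
      Finset.card_insert_of_notMem hcnotmem, Finset.card_singleton]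
  have hγP0 : γ ∉ P0 := by
    rw [hP0]
    simp only [Finset.mem_insert, Finset.mem_singleton]
    push_neg
    exact ⟨hβγ.symm, hγb, hγc, hγd⟩
  have hP0even : Even P0.card := by rw [hP0card]; exact ⟨2, rfl⟩
  have hS1 : ∑ x ∈ P0, x = β + γ := by
    rw [hP0, Finset.sum_insert hβnotmem, Finset.sum_insert hbnotmem,
      Finset.sum_insert hcnotmem, Finset.sum_singleton]
    linear_combination (u + v + γ) * h2
  have hS3 : ∑ x ∈ P0, x ^ 3 = β * γ * (β + γ) := by
    rw [hP0, Finset.sum_insert hβnotmem, Finset.sum_insert hbnotmem,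
      Finset.sum_insert hcnotmem, Finset.sum_singleton]
    linear_combination hprod + (2 * γ ^ 3 + β * γ ^ 2 + β ^ 2 * γ + β ^ 3 + 3 * v * γ ^ 2
      + 3 * v ^ 2 * γ + v ^ 3 + 3 * u * γ ^ 2 + 3 * u * v * γ + u * v ^ 2
      + 3 * u ^ 2 * γ + u ^ 2 * v + u ^ 3) * h2
  have memboth : ∀ X : Finset F8, Even X.card → (∑ x ∈ X, x) = β + γ →
      (∑ x ∈ X, x ^ 3) = β * γ * (β + γ) → X ∈ HbarGF8 β ∩ HbarGF8 γ := by
    intro X he e1 e3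
    constructor
    · rw [mem_Hbar_iff β X he, e1, e3]
      linear_combination (β * γ ^ 2 + 2 * β ^ 2 * γ + β ^ 3) * h2
    · rw [mem_Hbar_iff γ X he, e1, e3]
      linear_combination (γ ^ 3 + 2 * β * γ ^ 2 + β ^ 2 * γ) * h2
  have hP1card : P0ᶜ.card = 4 := by rw [Finset.card_compl, card_F8, hP0card]
  have hP1even : Even P0ᶜ.card := by rw [hP1card]; exact ⟨2, rfl⟩
  have hS1' : ∑ x ∈ P0ᶜ, x = β + γ := by
    have hh := Finset.sum_add_sum_compl P0 (fun x => x)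
    rw [hS1, sum_univ_zero] at hh
    linear_combination hh - (β + γ) * h2
  have hS3' : ∑ x ∈ P0ᶜ, x ^ 3 = β * γ * (β + γ) := by
    have hh := Finset.sum_add_sum_compl P0 (fun x => x ^ 3)
    rw [hS3, sum_univ_cube_zero] at hh
    linear_combination hh - β * γ * (β + γ) * h2
  refine ⟨P0, P0ᶜ, hP0card, hP1card, Finset.union_compl P0, Finset.inter_compl P0,
    by rw [hP0]; exact Finset.mem_insert_self _ _, Finset.mem_compl.mpr hγP0, ?_⟩
  apply Set.eq_of_subset_of_subset
  · intro X hX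
    obtain ⟨hXβ, hXγ⟩ := hX
    obtain ⟨he, hb⟩ := hXβ
    obtain ⟨-, hg⟩ := hXγ
    rw [sum_cube_shift X he β] at hb
    rw [sum_cube_shift X he γ] at hg
    simp only [Set.mem_insert_iff, Set.mem_singleton_iff]
    have hfac : (β + γ) * ((∑ x ∈ X, x) * ((∑ x ∈ X, x) + (β + γ))) = 0 := by
      linear_combination hb + hg + (β * γ * (∑ x ∈ X, x) - (∑ x ∈ X, x ^ 3)) * h2
    have hfac2 := (mul_eq_zero.mp hfac).resolve_left hδ
    rcases mul_eq_zero.mp hfac2 with hS | hS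
    · have h3 : ∑ x ∈ X, x ^ 3 = 0 := by
        linear_combination hb - (β * (∑ x ∈ X, x) + β ^ 2) * hS
      rcases claimA X he hS h3 with h | h
      · exact Or.inl h
      · exact Or.inr (Or.inl h)
    · have hSδ : ∑ x ∈ X, x = β + γ := by linear_combination hS - (β + γ) * h2
      have h3 : ∑ x ∈ X, x ^ 3 = β * γ * (β + γ) := by
        linear_combination hb - (β * ((∑ x ∈ X, x) + (β + γ)) + β ^ 2) * hSδ
          - β * (β + γ) ^ 2 * h2
      have hYeven : Even (X ∆ P0).card := by
        have hcs := card_symmDiff' X P0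
        rw [hP0card] at hcs
        have he' := Nat.even_iff.mp he
        rw [Nat.even_iff]
        omega
      have hY1 : ∑ x ∈ X ∆ P0, x = 0 := by
        rw [sum_symmDiff' X P0 (fun x => x), hSδ, hS1]
        exact CharTwo.add_self_eq_zero _
      have hY3 : ∑ x ∈ X ∆ P0, x ^ 3 = 0 := by
        rw [sum_symmDiff' X P0 (fun x => x ^ 3), h3, hS3]
        exact CharTwo.add_self_eq_zero _
      rcases claimA (X ∆ P0) hYeven hY1 hY3 with h | h
      · refine Or.inr (Or.inr (Or.inl ?_))
        have hbot : X ∆ P0 = ⊥ := by rw [h]; rfl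
        exact symmDiff_eq_bot.mp hbot
      · refine Or.inr (Or.inr (Or.inr ?_))
        have hX' : X = (X ∆ P0) ∆ P0 := (symmDiff_symmDiff_cancel_right P0 X).symm
        rw [h] at hX'
        rw [hX', show (univ : Finset F8) = ⊤ from rfl, symmDiff_comm, symmDiff_top, hnot_eq_compl]
  · intro X hX
    simp only [Set.mem_insert_iff, Set.mem_singleton_iff] at hX
    rcases hX with rfl | rfl | rfl | rfl
    · exact ⟨⟨by simp, by simp⟩, ⟨by simp, by simp⟩⟩
    · have heu : Even (univ : Finset F8).card := by
        rw [Finset.card_univ, card_F8]; exact ⟨4, rfl⟩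
      constructor
      · rw [mem_Hbar_iff β univ heu, sum_univ_cube_zero, sum_univ_zero]; ring
      · rw [mem_Hbar_iff γ univ heu, sum_univ_cube_zero, sum_univ_zero]; ring
    · exact memboth P0 hP0even hS1 hS3
    · exact memboth P0ᶜ hP1even hS1' hS3'

end HbarAux

theorem stmt_2 (β γ : GaloisField 2 3) (hβγ : β ≠ γ) :
    ∃ P0 P1 : Finset (GaloisField 2 3),
      P0.card = 4 ∧ P1.card = 4 ∧ P0 ∪ P1 = Finset.univ ∧ P0 ∩ P1 = ∅ ∧
      β ∈ P0 ∧ γ ∈ P1 ∧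
      HbarGF8 β ∩ HbarGF8 γ = {(∅ : Finset (GaloisField 2 3)), Finset.univ, P0, P1} := by
  classical
  obtain ⟨m, hm0, hm1⟩ := HbarAux.exists_ne_zero_ne_one
  have h2 := HbarAux.two_eq_zero
  have hδ : β + γ ≠ 0 := fun h => hβγ (by linear_combination h - γ * h2)
  have hm1' : m + 1 ≠ 0 := fun h => hm1 (by linear_combination h - h2)
  have hmm : m * (m + 1) ≠ 0 := mul_ne_zero hm0 hm1'
  obtain ⟨s, hs⟩ := HbarAux.cube_surj (m * (m + 1))⁻¹
  simp only at hs
  have hs0 : s ≠ 0 := by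
    intro h
    rw [h] at hs
    rw [zero_pow (by norm_num), eq_comm, inv_eq_zero] at hs
    exact hmm hs
  have key : s ^ 3 * (m * (m + 1)) = 1 := by rw [hs]; exact inv_mul_cancel₀ hmm
  refine HbarAux.main_aux β γ ((β + γ) * s) ((β + γ) * (s * m)) hβγ
    (mul_ne_zero hδ hs0) (mul_ne_zero hδ (mul_ne_zero hs0 hm0)) ?_ ?_
  · intro h
    have h1 : s = s * m := mul_left_cancel₀ hδ h
    exact hm1 (mul_left_cancel₀ hs0 (by rw [mul_one]; exact h1)).symm
  · calc ((β + γ) * s) * ((β + γ) * (s * m)) * (((β + γ) * s) + ((β + γ) * (s * m)))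
        = (β + γ) ^ 3 * (s ^ 3 * (m * (m + 1))) := by ring
      _ = (β + γ) ^ 3 := by rw [key, mul_one]
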